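/- Let G = (V, E) be a finite graph with incidence matrix D ∈ {-1,0,1}^{|V|×|E|} (for an arbitrary orientation), admittance matrix B = D Γ D^T where Γ is the diagonal matrix of link weights 1/r_e > 0, and let F ⊆ E_H be a set of links inside the attacked area H. Let B' be B with the contributions of links in F removed, and suppose Bθ = p and B'θ' = p - Δ. Then there exists a vector x ∈ ℝ^{|E_H|} with supp(x) = {e ∈ F : θ'_s ≠ θ'_t for e = (s,t)} ⊆ F such that D_H x = B_{H|G}(θ - θ') - Δ_H, where D_H is the incidence matrix of the subgraph H. In particular, defining x_e = b_{st}(θ'_s - θ'_t) for e = (s,t) ∈ F and x_e = 0 otherwise, this x satisfies the equation. -/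
import Mathlib


open Matrix Finset

theorem stmt2 {V E : Type*} [Fintype V] [DecidableEq V] [Fintype E] [DecidableEq E]
    (ends : E → V × V) (hends : ∀ e, (ends e).1 ≠ (ends e).2)
    (VH : Set V) [DecidablePred (· ∈ VH)]
    (EH : Set E) [DecidablePred (· ∈ EH)]
    (hind : ∀ e ∈ EH, (ends e).1 ∈ VH ∧ (ends e).2 ∈ VH)
    (F : Finset E) (hFH : ∀ e ∈ F, e ∈ EH)
    (Γ : E → ℝ) (hΓ : ∀ e, 0 < Γ e)
    (D : Matrix V E ℝ)
    (hD : ∀ v e, D v e =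
      if v = (ends e).1 then 1 else if v = (ends e).2 then -1 else 0)
    (B B' : Matrix V V ℝ)
    (hB : B = D * Matrix.diagonal Γ * Dᵀ)
    (hB' : B' = D * Matrix.diagonal (fun e => if e ∈ F then 0 else Γ e) * Dᵀ)
    (θ θ' p Δ : V → ℝ)
    (h1 : B *ᵥ θ = p) (h2 : B' *ᵥ θ' = p - Δ)
    (hnd : ∀ e ∈ F, θ' (ends e).1 ≠ θ' (ends e).2) :
    ∃ x : {e // e ∈ EH} → ℝ,
      (∀ e, x e ≠ 0 ↔ e.1 ∈ F) ∧
      (∀ e, x e = if e.1 ∈ F then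
        -Γ e.1 * (θ' (ends e.1).1 - θ' (ends e.1).2) else 0) ∧
      (Matrix.of (fun (v : {v // v ∈ VH}) (e : {e // e ∈ EH}) => D v.1 e.1)) *ᵥ x
        = fun v => (B *ᵥ (θ - θ')) v.1 - Δ v.1 := by
  classical
  refine ⟨fun e => if e.1 ∈ F then -Γ e.1 * (θ' (ends e.1).1 - θ' (ends e.1).2) else 0,
    ?_, fun e => rfl, ?_⟩
  · intro e
    by_cases h : e.1 ∈ F
    · simp only [h, if_pos, iff_true]
      exact mul_ne_zero (neg_ne_zero.2 (hΓ e.1).ne') (sub_ne_zero.2 (hnd e.1 h))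
    · simp [h]
  · funext v
    have hDt : ∀ e, ∑ w, D w e * θ' w = θ' (ends e).1 - θ' (ends e).2 := by
      intro e
      have hne := hends e
      have hpt : ∀ w, D w e * θ' w =
          (if w = (ends e).1 then θ' w else 0) - (if w = (ends e).2 then θ' w else 0) := by
        intro w
        rw [hD]
        by_cases h1 : w = (ends e).1
        · subst h1; simp [hne]
        · by_cases h2 : w = (ends e).2 <;> simp [h1, h2, Ne.symm hne]
      simp [hpt, Finset.sum_sub_distrib]
    have hquad : ∀ (γ : E → ℝ), ((D * Matrix.diagonal γ * Dᵀ) *ᵥ θ') v.1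
        = ∑ e, D v.1 e * γ e * (θ' (ends e).1 - θ' (ends e).2) := by
      intro γ
      have hA : D * Matrix.diagonal γ = Matrix.of (fun i j => D i j * γ j) := by
        ext i j; simp [Matrix.mul_diagonal]
      have : ∀ w, (D * Matrix.diagonal γ * Dᵀ) v.1 w = ∑ e, D v.1 e * γ e * D w e := by
        intro w
        simp [hA, Matrix.mul_apply]
      simp only [mulVec, dotProduct, this]
      simp only [Finset.sum_mul]
      rw [Finset.sum_comm]
      refine Finset.sum_congr rfl fun e _ => ?_
      rw [← hDt e, Finset.mul_sum]
      exact Finset.sum_congr rfl fun w _ => by ring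
    have hRHS : (B *ᵥ (θ - θ')) v.1 - Δ v.1 = (B' *ᵥ θ') v.1 - (B *ᵥ θ') v.1 := by
      rw [mulVec_sub, h1]
      have := congrFun h2 v.1
      simp only [Pi.sub_apply] at this ⊢
      linarith
    rw [Matrix.mulVec, dotProduct]
    simp only [Matrix.of_apply]
    rw [hRHS, hB, hB', hquad, hquad, ← Finset.sum_sub_distrib]
    have hstep : ∑ e : E, (D v.1 e * (if e ∈ F then 0 else Γ e) * (θ' (ends e).1 - θ' (ends e).2)
          - D v.1 e * Γ e * (θ' (ends e).1 - θ' (ends e).2))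
        = ∑ e : E, (if e ∈ EH then
            (if e ∈ F then D v.1 e * (-Γ e * (θ' (ends e).1 - θ' (ends e).2)) else 0) else 0) := by
      refine Finset.sum_congr rfl fun e _ => ?_
      by_cases hf : e ∈ F
      · simp [hf, hFH e hf]; ring
      · simp [hf]
    rw [hstep, ← Finset.sum_filter,
      Finset.sum_subtype (p := (· ∈ EH)) _ (by simp)
        (fun e => if e ∈ F then D v.1 e * (-Γ e * (θ' (ends e).1 - θ' (ends e).2)) else 0)]
    refine Finset.sum_congr rfl fun e _ => ?_
    by_cases hf : e.1 ∈ F <;> simp [hf] <;> ring
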